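/- arXiv:2509.19655 — 5 statements merged into one kernel-verified Lean document; each statement's English description precedes it below -/
import Mathlib

section
/- Let H be a 2-edge-connected subgraph of a 2-edge-connected graph G, let S be a 2-edge-connected spanning subgraph of H, and let S' be a 2-edge-connected spanning subgraph of G|H (the graph obtained by contracting V(H)). Then S ∪ S' (interpreting edges of S' as their corresponding edges in G) is a 2-edge-connected spanning subgraph of G. -/
/-- Reachability in a multigraph given by the endpoint map `ends`, using only
edges from the edge set `F`. -/
def MGReach {V E : Type*} (ends : E → Sym2 V) (F : Set E) (a b : V) : Prop :=
  Relation.ReflTransGen (fun x y => ∃ e ∈ F, ends e = s(x, y)) a b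

/-- The edge set `F` is a 2-edge-connected spanning subgraph on the vertex set `U`:
all its edges have both endpoints in `U`, it connects all of `U`, and it still
connects all of `U` after the removal of any single edge. -/
def MGTwoECOn {V E : Type*} (ends : E → Sym2 V) (U : Set V) (F : Set E) : Prop :=
  (∀ e ∈ F, ∀ x ∈ ends e, x ∈ U) ∧
  (∀ a ∈ U, ∀ b ∈ U, MGReach ends F a b) ∧
  ∀ e₀ ∈ F, ∀ a ∈ U, ∀ b ∈ U, MGReach ends (F \ {e₀}) a b

private lemma sym2_map_eq' {V V' : Type*} (c : V → V') (z : Sym2 V) (x y : V')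
    (h : Sym2.map c z = s(x, y)) : ∃ p q, z = s(p, q) ∧ c p = x ∧ c q = y := by
  induction z using Sym2.ind with
  | _ p q =>
    rw [Sym2.map_pair_eq, Sym2.eq_iff] at h
    rcases h with ⟨h1, h2⟩ | ⟨h1, h2⟩
    · exact ⟨p, q, rfl, h1, h2⟩
    · exact ⟨q, p, Sym2.eq_swap, h2, h1⟩

private lemma lift_reach {V V' E : Type*} (ends : E → Sym2 V)
    (VH : Set V) (c : V → V')
    (hinj : ∀ u v : V, c u = c v → u = v ∨ (u ∈ VH ∧ v ∈ VH))
    (T : Set E) (hT : ∀ a ∈ VH, ∀ b ∈ VH, MGReach ends T a b)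
    (F' : Set E)
    {a b : V} (h : MGReach (fun e => Sym2.map c (ends e)) F' (c a) (c b)) :
    MGReach ends (T ∪ F') a b := by
  have same : ∀ u v : V, c u = c v → MGReach ends (T ∪ F') u v := by
    intro u v huv
    rcases hinj u v huv with rfl | ⟨hu, hv⟩
    · exact Relation.ReflTransGen.refl
    · exact Relation.ReflTransGen.mono (fun x y ⟨e, he, hx⟩ => ⟨e, Or.inl he, hx⟩) _ _ (hT u hu v hv)
  suffices H : ∀ y', Relation.ReflTransGen
      (fun x y => ∃ e ∈ F', Sym2.map c (ends e) = s(x, y)) (c a) y' →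
      ∀ b, c b = y' → MGReach ends (T ∪ F') a b by
    exact H (c b) h b rfl
  intro y' h'
  induction h' with
  | refl => intro b hb; exact same a b hb.symm
  | tail h1 h2 ih =>
      intro b hb
      obtain ⟨e, he, hmap⟩ := h2
      obtain ⟨p, q, hpq, hp, hq⟩ := sym2_map_eq' c (ends e) _ _ hmap
      have hap := ih p hp
      have hpq' : MGReach ends (T ∪ F') p q :=
        Relation.ReflTransGen.single ⟨e, Or.inr he, hpq⟩
      have hqb := same q b (hq.trans hb.symm)
      exact (hap.trans hpq').trans hqb

/-- Let `H` (with vertex set `VH` and edge set `FH`) be a 2-edge-connected subgraph of a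
2-edge-connected graph `G`, let `S` be a 2-edge-connected spanning subgraph of `H`, and
let `S'` be a 2-edge-connected spanning subgraph of `G|H`, the graph obtained by
contracting `V(H)` (described by the vertex map `c` identifying exactly the vertices
of `VH`; the edges of `G|H` are in one-to-one correspondence with those of `G`).
Then `S ∪ S'` (interpreting the edges of `S'` as the corresponding edges of `G`) is a
2-edge-connected spanning subgraph of `G`. -/
theorem glue_contracted_solution
    {V V' E : Type*} (ends : E → Sym2 V)
    (hG : MGTwoECOn ends Set.univ Set.univ)
    (VH : Set V) (FH : Set E) (hH : MGTwoECOn ends VH FH)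
    (S : Set E) (hSsub : S ⊆ FH) (hS : MGTwoECOn ends VH S)
    (c : V → V') (hsurj : Function.Surjective c)
    (hconst : ∀ u ∈ VH, ∀ v ∈ VH, c u = c v)
    (hinj : ∀ u v : V, c u = c v → u = v ∨ (u ∈ VH ∧ v ∈ VH))
    (S' : Set E)
    (hS' : MGTwoECOn (fun e => Sym2.map c (ends e)) Set.univ S') :
    MGTwoECOn ends Set.univ (S ∪ S') := by
  obtain ⟨hS1, hS2, hS3⟩ := hS
  obtain ⟨hS'1, hS'2, hS'3⟩ := hS'
  refine ⟨fun e _ x _ => trivial, ?_, ?_⟩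
  · intro a _ b _
    exact lift_reach ends VH c hinj S hS2 S' (hS'2 (c a) trivial (c b) trivial)
  · intro e₀ he₀ a _ b _
    have hT : ∀ x ∈ VH, ∀ y ∈ VH, MGReach ends (S \ {e₀}) x y := by
      by_cases h : e₀ ∈ S
      · exact hS3 e₀ h
      · intro x hx y hy
        exact Relation.ReflTransGen.mono
          (fun u v ⟨e, he, hev⟩ => ⟨e, ⟨he, fun hc => h ((Set.mem_singleton_iff.mp hc) ▸ he)⟩, hev⟩) _ _ (hS2 x hx y hy)
    have hF : MGReach (fun e => Sym2.map c (ends e)) (S' \ {e₀}) (c a) (c b) := by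
      by_cases h : e₀ ∈ S'
      · exact hS'3 e₀ h (c a) trivial (c b) trivial
      · exact Relation.ReflTransGen.mono
          (fun u v ⟨e, he, hev⟩ => ⟨e, ⟨he, fun hc => h ((Set.mem_singleton_iff.mp hc) ▸ he)⟩, hev⟩) _ _ (hS'2 (c a) trivial (c b) trivial)
    have hmain := lift_reach ends VH c hinj (S \ {e₀}) hT (S' \ {e₀}) hF
    refine Relation.ReflTransGen.mono ?_ _ _ hmain
    rintro x y ⟨e, he, hev⟩
    refine ⟨e, ?_, hev⟩
    rcases he with ⟨he, hne⟩ | ⟨he, hne⟩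
    · exact ⟨Or.inl he, hne⟩
    · exact ⟨Or.inr he, hne⟩
end

section
/- Let G be a 2-edge-connected graph, let v be a cut vertex of G, and let (V1, V2) be a partition of V(G) \ {v} with V1 and V2 nonempty such that there are no edges between V1 and V2 in G. Then the minimum number of edges of a 2-edge-connected spanning subgraph of G equals the sum of the minimum numbers of edges of 2-edge-connected spanning subgraphs of G[V1 ∪ {v}] and G[V2 ∪ {v}]. -/
variable {V : Type*}

/-- Reachability between vertices using only edges from the edge set `F`. -/
def ReachE (F : Set (Sym2 V)) (a b : V) : Prop :=
  Relation.ReflTransGen (fun x y => s(x, y) ∈ F) a b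

/-- `F` is (the edge set of) a 2-edge-connected spanning subgraph of the subgraph of `G`
induced on the vertex set `U`: its edges are edges of `G` lying inside `U`, it connects
all of `U`, and it keeps connecting all of `U` after removal of any single edge. -/
def TwoECWithin (G : SimpleGraph V) (U : Set V) (F : Set (Sym2 V)) : Prop :=
  F ⊆ G.edgeSet ∧ (∀ e ∈ F, ∀ x ∈ e, x ∈ U) ∧
    (∀ a ∈ U, ∀ b ∈ U, ReachE F a b) ∧
    ∀ e ∈ F, ∀ a ∈ U, ∀ b ∈ U, ReachE (F \ {e}) a b

/-- `optOn G U` is the minimum number of edges of a 2-edge-connected spanning subgraph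
of the subgraph of `G` induced on `U`. -/
noncomputable def optOn (G : SimpleGraph V) (U : Set V) : ℕ :=
  sInf {n | ∃ F : Set (Sym2 V), TwoECWithin G U F ∧ F.ncard = n}

lemma reachE_mono {F F' : Set (Sym2 V)} (h : F ⊆ F') {a b : V}
    (hr : ReachE F a b) : ReachE F' a b :=
  Relation.ReflTransGen.mono (r := fun x y => s(x, y) ∈ F) (p := fun x y => s(x, y) ∈ F')
    (fun _ _ hxy => h hxy) a b hr

lemma reach_restrict {U1 U2 : Set V} {v : V}
    (hmeet : ∀ x, x ∈ U1 → x ∈ U2 → x = v)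
    {F A : Set (Sym2 V)}
    (hsplit : ∀ e ∈ F, (e ∈ A ∧ ∀ x ∈ e, x ∈ U1) ∨ (∀ x ∈ e, x ∈ U2))
    {a b : V} (ha : a ∈ U1) (hb : b ∈ U1) (h : ReachE F a b) : ReachE A a b := by
  have key : ∀ c, ReachE F a c →
      (c ∈ U1 → ReachE A a c) ∧ (c ∉ U1 → ReachE A a v) := by
    intro c hc
    induction hc with
    | refl => exact ⟨fun _ => Relation.ReflTransGen.refl, fun h => absurd ha h⟩
    | @tail p q hp hpq ih =>
      rcases hsplit _ hpq with ⟨hA, hU⟩ | hU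
      · have hp1 : p ∈ U1 := hU p (Sym2.mem_mk_left _ _)
        have hq1 : q ∈ U1 := hU q (Sym2.mem_mk_right _ _)
        exact ⟨fun _ => (ih.1 hp1).tail hA, fun h => absurd hq1 h⟩
      · have hp2 : p ∈ U2 := hU p (Sym2.mem_mk_left _ _)
        have hq2 : q ∈ U2 := hU q (Sym2.mem_mk_right _ _)
        have hav : ReachE A a v := by
          by_cases hp1 : p ∈ U1
          · exact (hmeet p hp1 hp2) ▸ ih.1 hp1
          · exact ih.2 hp1
        exact ⟨fun hq1 => (hmeet q hq1 hq2) ▸ hav, fun _ => hav⟩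
  exact (key b h).1 hb

lemma twoEC_disjoint (G : SimpleGraph V) {U1 U2 : Set V} {v : V}
    (hmeet : ∀ x, x ∈ U1 → x ∈ U2 → x = v)
    {F1 F2 : Set (Sym2 V)} (h1 : TwoECWithin G U1 F1) (h2 : TwoECWithin G U2 F2) :
    Disjoint F1 F2 := by
  rw [Set.disjoint_left]
  intro e he1 he2
  induction e using Sym2.ind with
  | _ x y =>
    have hx := hmeet x (h1.2.1 _ he1 x (Sym2.mem_mk_left _ _))
      (h2.2.1 _ he2 x (Sym2.mem_mk_left _ _))
    have hy := hmeet y (h1.2.1 _ he1 y (Sym2.mem_mk_right _ _))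
      (h2.2.1 _ he2 y (Sym2.mem_mk_right _ _))
    have hadj : G.Adj x y := (G.mem_edgeSet).1 (h1.1 he1)
    rw [hx, hy] at hadj
    exact G.irrefl hadj

lemma twoEC_union (G : SimpleGraph V) {U1 U2 : Set V} {v : V}
    (hv1 : v ∈ U1) (hv2 : v ∈ U2)
    (hmeet : ∀ x, x ∈ U1 → x ∈ U2 → x = v) (hcover : U1 ∪ U2 = Set.univ)
    {F1 F2 : Set (Sym2 V)} (h1 : TwoECWithin G U1 F1) (h2 : TwoECWithin G U2 F2) :
    TwoECWithin G Set.univ (F1 ∪ F2) := by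
  have hside : ∀ x : V, x ∈ U1 ∨ x ∈ U2 := by
    intro x
    have : x ∈ U1 ∪ U2 := hcover ▸ Set.mem_univ x
    exact this
  have hdisjF := twoEC_disjoint G hmeet h1 h2
  refine ⟨Set.union_subset h1.1 h2.1, fun _ _ x _ => Set.mem_univ x, ?_, ?_⟩
  · intro a _ b _
    have hav : ReachE (F1 ∪ F2) a v := by
      rcases hside a with ha | ha
      · exact reachE_mono Set.subset_union_left (h1.2.2.1 a ha v hv1)
      · exact reachE_mono Set.subset_union_right (h2.2.2.1 a ha v hv2)
    have hvb : ReachE (F1 ∪ F2) v b := by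
      rcases hside b with hb | hb
      · exact reachE_mono Set.subset_union_left (h1.2.2.1 v hv1 b hb)
      · exact reachE_mono Set.subset_union_right (h2.2.2.1 v hv2 b hb)
    exact hav.trans hvb
  · intro e he a _ b _
    rcases he with heF1 | heF2
    · have hne2 : e ∉ F2 := Set.disjoint_left.1 hdisjF heF1
      have hsub1 : F1 \ {e} ⊆ (F1 ∪ F2) \ {e} :=
        fun x hx => ⟨Or.inl hx.1, hx.2⟩
      have hsub2 : F2 ⊆ (F1 ∪ F2) \ {e} :=
        fun x hx => ⟨Or.inr hx, fun hxe => hne2 (hxe ▸ hx)⟩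
      have hav : ReachE ((F1 ∪ F2) \ {e}) a v := by
        rcases hside a with ha | ha
        · exact reachE_mono hsub1 (h1.2.2.2 e heF1 a ha v hv1)
        · exact reachE_mono hsub2 (h2.2.2.1 a ha v hv2)
      have hvb : ReachE ((F1 ∪ F2) \ {e}) v b := by
        rcases hside b with hb | hb
        · exact reachE_mono hsub1 (h1.2.2.2 e heF1 v hv1 b hb)
        · exact reachE_mono hsub2 (h2.2.2.1 v hv2 b hb)
      exact hav.trans hvb
    · have hne1 : e ∉ F1 := Set.disjoint_right.1 hdisjF heF2
      have hsub2 : F2 \ {e} ⊆ (F1 ∪ F2) \ {e} :=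
        fun x hx => ⟨Or.inr hx.1, hx.2⟩
      have hsub1 : F1 ⊆ (F1 ∪ F2) \ {e} :=
        fun x hx => ⟨Or.inl hx, fun hxe => hne1 (hxe ▸ hx)⟩
      have hav : ReachE ((F1 ∪ F2) \ {e}) a v := by
        rcases hside a with ha | ha
        · exact reachE_mono hsub1 (h1.2.2.1 a ha v hv1)
        · exact reachE_mono hsub2 (h2.2.2.2 e heF2 a ha v hv2)
      have hvb : ReachE ((F1 ∪ F2) \ {e}) v b := by
        rcases hside b with hb | hb
        · exact reachE_mono hsub1 (h1.2.2.1 v hv1 b hb)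
        · exact reachE_mono hsub2 (h2.2.2.2 e heF2 v hv2 b hb)
      exact hav.trans hvb

/-- Restriction of a global 2ECSS to one side of the separation. -/
lemma twoEC_restrict (G : SimpleGraph V) {U1 U2 : Set V} {v : V}
    (hv1 : v ∈ U1)
    (hmeet : ∀ x, x ∈ U1 → x ∈ U2 → x = v)
    (hedges : ∀ e ∈ G.edgeSet, (∀ x ∈ e, x ∈ U1) ∨ (∀ x ∈ e, x ∈ U2))
    {F : Set (Sym2 V)} (hF : TwoECWithin G Set.univ F) :
    TwoECWithin G U1 {e ∈ F | ∀ x ∈ e, x ∈ U1} := by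
  set F1 : Set (Sym2 V) := {e ∈ F | ∀ x ∈ e, x ∈ U1} with hF1def
  have hsplit : ∀ e ∈ F, (e ∈ F1 ∧ ∀ x ∈ e, x ∈ U1) ∨ (∀ x ∈ e, x ∈ U2) := by
    intro e he
    rcases hedges e (hF.1 he) with h | h
    · exact Or.inl ⟨⟨he, h⟩, h⟩
    · exact Or.inr h
  refine ⟨fun e he => hF.1 he.1, fun e he => he.2, ?_, ?_⟩
  · intro a ha b hb
    exact reach_restrict hmeet hsplit ha hb
      (hF.2.2.1 a (Set.mem_univ a) b (Set.mem_univ b))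
  · intro e he a ha b hb
    have hr : ReachE (F \ {e}) a b :=
      hF.2.2.2 e he.1 a (Set.mem_univ a) b (Set.mem_univ b)
    refine reach_restrict hmeet ?_ ha hb hr
    intro e' he'
    rcases hsplit e' he'.1 with ⟨h1', h2'⟩ | h
    · exact Or.inl ⟨⟨h1', he'.2⟩, h2'⟩
    · exact Or.inr h

/-- Let `G` be a 2-edge-connected graph, `v` a cut vertex of `G`, and `(V1, V2)` a
partition of `V(G) \ {v}` with `V1`, `V2` nonempty and no edges between `V1` and `V2`.
Then the minimum size of a 2-edge-connected spanning subgraph of `G` equals the sum of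
the minimum sizes of 2-edge-connected spanning subgraphs of `G[V1 ∪ {v}]` and
`G[V2 ∪ {v}]`. -/
theorem opt_splits_at_cut_vertex [Fintype V] (G : SimpleGraph V)
    (hG : TwoECWithin G Set.univ G.edgeSet)
    (v : V)
    (hcut : ∃ a b : V, a ≠ v ∧ b ≠ v ∧
      ¬ Relation.ReflTransGen (fun x y => G.Adj x y ∧ x ≠ v ∧ y ≠ v) a b)
    (V1 V2 : Set V)
    (hpart : V1 ∪ V2 = ({v} : Set V)ᶜ) (hdisj : Disjoint V1 V2)
    (h1 : V1.Nonempty) (h2 : V2.Nonempty)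
    (hsep : ∀ a ∈ V1, ∀ b ∈ V2, ¬ G.Adj a b) :
    optOn G Set.univ = optOn G (V1 ∪ {v}) + optOn G (V2 ∪ {v}) := by
  set U1 : Set V := V1 ∪ {v} with hU1def
  set U2 : Set V := V2 ∪ {v} with hU2def
  have hv1 : v ∈ U1 := Or.inr rfl
  have hv2 : v ∈ U2 := Or.inr rfl
  have hvn1 : v ∉ V1 := by
    intro h
    have : v ∈ ({v} : Set V)ᶜ := hpart ▸ Or.inl h
    exact this rfl
  have hvn2 : v ∉ V2 := by
    intro h
    have : v ∈ ({v} : Set V)ᶜ := hpart ▸ Or.inr h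
    exact this rfl
  have hmeet : ∀ x, x ∈ U1 → x ∈ U2 → x = v := by
    intro x hx1 hx2
    rcases hx1 with hx1 | hx1
    · rcases hx2 with hx2 | hx2
      · exact absurd hx2 (Set.disjoint_left.1 hdisj hx1)
      · exact hx2
    · exact hx1
  have hmeet' : ∀ x, x ∈ U2 → x ∈ U1 → x = v := fun x a b => hmeet x b a
  have hside : ∀ x : V, x ∈ U1 ∨ x ∈ U2 := by
    intro x
    by_cases hx : x = v
    · exact Or.inl (Or.inr hx)
    · have : x ∈ V1 ∪ V2 := by rw [hpart]; exact hx
      rcases this with h | h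
      · exact Or.inl (Or.inl h)
      · exact Or.inr (Or.inl h)
  have hcover : U1 ∪ U2 = Set.univ :=
    Set.eq_univ_of_forall fun x => (hside x).elim Or.inl Or.inr
  have hedges : ∀ e ∈ G.edgeSet, (∀ x ∈ e, x ∈ U1) ∨ (∀ x ∈ e, x ∈ U2) := by
    intro e he
    induction e using Sym2.ind with
    | _ x y =>
      have hadj : G.Adj x y := (G.mem_edgeSet).1 he
      have hmem : ∀ z w : V, z ∈ U1 → w ∈ U1 → ∀ u ∈ s(z, w), u ∈ U1 := by
        intro z w hz hw u hu
        rw [Sym2.mem_iff] at hu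
        rcases hu with rfl | rfl <;> assumption
      have hmem2 : ∀ z w : V, z ∈ U2 → w ∈ U2 → ∀ u ∈ s(z, w), u ∈ U2 := by
        intro z w hz hw u hu
        rw [Sym2.mem_iff] at hu
        rcases hu with rfl | rfl <;> assumption
      rcases hside x with hx | hx <;> rcases hside y with hy | hy
      · exact Or.inl (hmem x y hx hy)
      · -- x ∈ U1, y ∈ U2
        rcases hx with hx | hx
        · rcases hy with hy | hy
          · exact absurd hadj (hsep x hx y hy)
          · exact Or.inl (hmem x y (Or.inl hx) (Or.inr hy))
        · exact Or.inr (hmem2 x y (Or.inr hx) hy)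
      · -- x ∈ U2, y ∈ U1
        rcases hx with hx | hx
        · rcases hy with hy | hy
          · exact absurd hadj.symm (hsep y hy x hx)
          · exact Or.inr (hmem2 x y (Or.inl hx) (Or.inr hy))
        · exact Or.inl (hmem x y (Or.inr hx) hy)
      · exact Or.inr (hmem2 x y hx hy)
  have hedges' : ∀ e ∈ G.edgeSet, (∀ x ∈ e, x ∈ U2) ∨ (∀ x ∈ e, x ∈ U1) :=
    fun e he => (hedges e he).symm
  -- the three optimization sets
  set S : Set ℕ := {n | ∃ F : Set (Sym2 V), TwoECWithin G Set.univ F ∧ F.ncard = n}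
    with hSdef
  set S1 : Set ℕ := {n | ∃ F : Set (Sym2 V), TwoECWithin G U1 F ∧ F.ncard = n}
    with hS1def
  set S2 : Set ℕ := {n | ∃ F : Set (Sym2 V), TwoECWithin G U2 F ∧ F.ncard = n}
    with hS2def
  have hSne : S.Nonempty := ⟨G.edgeSet.ncard, G.edgeSet, hG, rfl⟩
  have hS1ne : S1.Nonempty :=
    ⟨_, _, twoEC_restrict G hv1 hmeet hedges hG, rfl⟩
  have hS2ne : S2.Nonempty :=
    ⟨_, _, twoEC_restrict G hv2 hmeet' hedges' hG, rfl⟩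
  have heq1 : optOn G Set.univ = sInf S := rfl
  have heq2 : optOn G U1 = sInf S1 := rfl
  have heq3 : optOn G U2 = sInf S2 := rfl
  rw [heq1, heq2, heq3]
  apply le_antisymm
  · -- sInf S ≤ sInf S1 + sInf S2 : glue minimizers
    obtain ⟨F1, hF1, hc1⟩ := Nat.sInf_mem hS1ne
    obtain ⟨F2, hF2, hc2⟩ := Nat.sInf_mem hS2ne
    have hdisjF := twoEC_disjoint G hmeet hF1 hF2
    have hunion := twoEC_union G hv1 hv2 hmeet hcover hF1 hF2
    refine Nat.sInf_le ⟨F1 ∪ F2, hunion, ?_⟩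
    rw [Set.ncard_union_eq hdisjF (Set.toFinite _) (Set.toFinite _), hc1, hc2]
  · -- sInf S1 + sInf S2 ≤ sInf S : split a minimizer
    obtain ⟨F, hF, hc⟩ := Nat.sInf_mem hSne
    set F1 : Set (Sym2 V) := {e ∈ F | ∀ x ∈ e, x ∈ U1} with hF1def
    set F2 : Set (Sym2 V) := {e ∈ F | ∀ x ∈ e, x ∈ U2} with hF2def
    have hTF1 : TwoECWithin G U1 F1 := twoEC_restrict G hv1 hmeet hedges hF
    have hTF2 : TwoECWithin G U2 F2 := twoEC_restrict G hv2 hmeet' hedges' hF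
    have hFeq : F = F1 ∪ F2 := by
      apply Set.Subset.antisymm
      · intro e he
        rcases hedges e (hF.1 he) with h | h
        · exact Or.inl ⟨he, h⟩
        · exact Or.inr ⟨he, h⟩
      · exact Set.union_subset (fun e he => he.1) (fun e he => he.1)
    have hdisjF := twoEC_disjoint G hmeet hTF1 hTF2
    have hle1 : sInf S1 ≤ F1.ncard := Nat.sInf_le ⟨F1, hTF1, rfl⟩
    have hle2 : sInf S2 ≤ F2.ncard := Nat.sInf_le ⟨F2, hTF2, rfl⟩
    have hcard : F1.ncard + F2.ncard = F.ncard := by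
      rw [hFeq, Set.ncard_union_eq hdisjF (Set.toFinite _) (Set.toFinite _)]
    omega
end

section
/- Let G be a 2-vertex-connected multigraph with at least 3 vertices. Then there exists a minimum-size 2-edge-connected spanning subgraph of G that contains no self-loops or parallel edges. -/
/-- The edge set `F` is a 2-edge-connected spanning subgraph of the multigraph:
it connects all vertices and keeps doing so after removing any single edge. -/
def MGTwoECSS {V E : Type*} (ends : E → Sym2 V) (F : Set E) : Prop :=
  (∀ a b : V, MGReach ends F a b) ∧
    ∀ e₀ ∈ F, ∀ a b : V, MGReach ends (F \ {e₀}) a b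

/-- A multigraph is 2-vertex-connected: it has at least 3 vertices, it is connected,
and it remains connected after the removal of any single vertex. -/
def MGTwoVC {V E : Type*} (ends : E → Sym2 V) : Prop :=
  3 ≤ Nat.card V ∧ (∀ a b : V, MGReach ends Set.univ a b) ∧
    ∀ v a b : V, a ≠ v → b ≠ v →
      Relation.ReflTransGen
        (fun x y => x ≠ v ∧ y ≠ v ∧ ∃ e : E, ends e = s(x, y)) a b

open Relation Set

section helpers
variable {V E : Type*} {ends : E → Sym2 V} {F F' : Set E} {a b : V}

lemma sym2_rep (z : Sym2 V) : ∃ u v, z = s(u, v) :=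
  Sym2.ind (fun u v => ⟨u, v, rfl⟩) z

lemma MGReach.rfl : MGReach ends F a a := ReflTransGen.refl

lemma MGReach.single {e : E} (he : e ∈ F) (h : ends e = s(a, b)) :
    MGReach ends F a b := ReflTransGen.single ⟨e, he, h⟩

lemma MGReach.trans {c : V} (h1 : MGReach ends F a b) (h2 : MGReach ends F b c) :
    MGReach ends F a c := ReflTransGen.trans h1 h2

lemma MGReach.tail' {c : V} (h1 : MGReach ends F a b) {e : E} (he : e ∈ F)
    (h : ends e = s(b, c)) : MGReach ends F a c :=
  ReflTransGen.tail h1 ⟨e, he, h⟩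

lemma MGReach.symm (h : MGReach ends F a b) : MGReach ends F b a := by
  have hs : Symmetric (fun x y => ∃ e ∈ F, ends e = s(x, y)) := by
    rintro x y ⟨f, hf, hfx⟩
    exact ⟨f, hf, hfx.trans Sym2.eq_swap⟩
  exact (@Relation.ReflTransGen.stdSymm _ _ ⟨fun _ _ h => hs h⟩).symm _ _ h

lemma MGReach.mono (hFF : F ⊆ F') (h : MGReach ends F a b) : MGReach ends F' a b :=
  ReflTransGen.mono (fun x y ⟨f, hf, h2⟩ => ⟨f, hFF hf, h2⟩) _ _ h

lemma MGReach.lift (h : ∀ x y f, f ∈ F → ends f = s(x, y) → MGReach ends F' x y)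
    (hab : MGReach ends F a b) : MGReach ends F' a b := by
  induction hab with
  | refl => exact ReflTransGen.refl
  | tail _ hstep ih =>
    obtain ⟨f, hf, hf2⟩ := hstep
    exact ih.trans (h _ _ f hf hf2)

lemma exists_cross {α : Type*} {r : α → α → Prop} {P : α → Prop} {a b : α}
    (hab : Relation.ReflTransGen r a b) (ha : P a) :
    ¬ P b → ∃ x y, r x y ∧ P x ∧ ¬ P y := by
  induction hab with
  | refl => exact fun hb => absurd ha hb
  | @tail c d _ hcd ih =>
    intro hd
    by_cases hc : P c
    · exact ⟨c, d, hcd, hc, hd⟩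
    · exact ih hc

end helpers

/-- Let `G` be a 2-vertex-connected multigraph with at least 3 vertices.  Then there
exists a minimum-size 2-edge-connected spanning subgraph of `G` that contains no
self-loops or parallel edges. -/
theorem exists_min_simple_2ECSS {V E : Type*} [Fintype V] [Fintype E]
    (ends : E → Sym2 V) (h2vc : MGTwoVC ends) :
    ∃ F : Set E, MGTwoECSS ends F ∧
      (∀ F' : Set E, MGTwoECSS ends F' → F.ncard ≤ F'.ncard) ∧
      (∀ e ∈ F, ¬ (ends e).IsDiag) ∧
      ∀ e ∈ F, ∀ e' ∈ F, e ≠ e' → ends e ≠ ends e' := by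
  classical
  obtain ⟨hcard, hconn, hvc⟩ := h2vc
  -- a third vertex always exists
  have hthird : ∀ u v : V, ∃ w : V, w ≠ u ∧ w ≠ v := by
    intro u v
    by_contra h
    push_neg at h
    have hsub : (Finset.univ : Finset V) ⊆ {u, v} := by
      intro w _
      rcases eq_or_ne w u with h1 | h1
      · simp [h1]
      · simp [h w h1]
    have h2 : Fintype.card V ≤ 2 := by
      calc Fintype.card V = (Finset.univ : Finset V).card := (Finset.card_univ).symm
        _ ≤ ({u, v} : Finset V).card := Finset.card_le_card hsub
        _ ≤ ({v} : Finset V).card + 1 := Finset.card_insert_le _ _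
        _ ≤ 2 := by simp
    rw [Nat.card_eq_fintype_card] at hcard
    omega
  -- univ is a 2ECSS
  have huniv : MGTwoECSS ends (Set.univ : Set E) := by
    refine ⟨hconn, ?_⟩
    intro e₀ _ a b
    by_cases hdiag : (ends e₀).IsDiag
    · refine MGReach.lift (fun x y f hf hfxy => ?_) (hconn a b)
      rcases eq_or_ne f e₀ with rfl | hne
      · have : x = y := Sym2.mk_isDiag_iff.mp (hfxy ▸ hdiag)
        exact this ▸ MGReach.rfl
      · exact MGReach.single ⟨mem_univ f, hne⟩ hfxy
    · obtain ⟨u, v, huv⟩ := sym2_rep (ends e₀)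
      have hune : u ≠ v := by
        intro h; exact hdiag (huv ▸ (Sym2.mk_isDiag_iff.mpr h))
      -- paths avoiding u or v avoid e₀
      have avoid : ∀ z : V, (z = u ∨ z = v) → ∀ x y : V,
          Relation.ReflTransGen (fun x y => x ≠ z ∧ y ≠ z ∧ ∃ e : E, ends e = s(x, y)) x y →
          MGReach ends (Set.univ \ {e₀}) x y := by
        rintro z hz x y hpath
        refine ReflTransGen.mono ?_ _ _ hpath
        rintro p q ⟨hp, hq, f, hf⟩
        refine ⟨f, ⟨mem_univ f, ?_⟩, hf⟩
        rintro rfl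
        rw [huv] at hf
        rcases Sym2.eq_iff.mp hf with ⟨h1, h2⟩ | ⟨h1, h2⟩ <;>
          rcases hz with rfl | rfl <;> simp_all
      obtain ⟨w, hwu, hwv⟩ := hthird u v
      have key : ∀ x : V, MGReach ends (Set.univ \ {e₀}) u x := by
        intro x
        rcases eq_or_ne x u with rfl | hxu
        · exact MGReach.rfl
        rcases eq_or_ne x v with rfl | hxv
        · -- u to w avoiding x(=v), then w to x avoiding u
          have p1 := hvc x u w hune hwv
          have p2 := hvc u w x hwu (hune.symm)
          exact (avoid x (Or.inr rfl) u w p1).trans (avoid u (Or.inl rfl) w x p2)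
        · exact avoid v (Or.inr rfl) u x (hvc v u x hune hxv)
      exact (key a).symm.trans (key b)
  -- number of (ordered) parallel pairs
  set PS : Set E → Set (E × E) :=
    (fun G => {p : E × E | p.1 ∈ G ∧ p.2 ∈ G ∧ p.1 ≠ p.2 ∧ ends p.1 = ends p.2}) with hPS
  set S₁ : Set ℕ := {k | ∃ F : Set E, MGTwoECSS ends F ∧ F.ncard = k} with hS₁def
  have hS₁ : S₁.Nonempty := ⟨_, Set.univ, huniv, rfl⟩
  set n : ℕ := sInf S₁ with hn_def
  obtain ⟨F₀, hF₀, hF₀n⟩ := Nat.sInf_mem hS₁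
  set S₂ : Set ℕ := {k | ∃ F : Set E, MGTwoECSS ends F ∧ F.ncard = n ∧ (PS F).ncard = k}
    with hS₂def
  have hS₂ : S₂.Nonempty := ⟨_, F₀, hF₀, hF₀n, rfl⟩
  obtain ⟨F, hF, hFn, hFp⟩ := Nat.sInf_mem hS₂
  have hmin : ∀ F' : Set E, MGTwoECSS ends F' → F.ncard ≤ F'.ncard := by
    intro F' hF'
    rw [hFn]
    exact Nat.sInf_le ⟨F', hF', rfl⟩
  -- no loops
  have hloops : ∀ e ∈ F, ¬ (ends e).IsDiag := by
    intro e he hdiag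
    have hsub : MGTwoECSS ends (F \ {e}) := by
      constructor
      · intro a b
        refine MGReach.lift (fun x y f hf hfxy => ?_) (hF.1 a b)
        rcases eq_or_ne f e with rfl | hne
        · have : x = y := Sym2.mk_isDiag_iff.mp (hfxy ▸ hdiag)
          exact this ▸ MGReach.rfl
        · exact MGReach.single ⟨hf, hne⟩ hfxy
      · intro e₀ he₀ a b
        refine MGReach.lift (fun x y f hf hfxy => ?_) (hF.2 e₀ he₀.1 a b)
        rcases eq_or_ne f e with rfl | hne
        · have : x = y := Sym2.mk_isDiag_iff.mp (hfxy ▸ hdiag)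
          exact this ▸ MGReach.rfl
        · exact MGReach.single ⟨⟨hf.1, hne⟩, hf.2⟩ hfxy
    have := hmin _ hsub
    have hlt : (F \ {e}).ncard < F.ncard :=
      Set.ncard_diff_singleton_lt_of_mem he (Set.toFinite F)
    omega
  -- no parallel edges
  have hpar : ∀ e ∈ F, ∀ e' ∈ F, e ≠ e' → ends e ≠ ends e' := by
    intro e he e' he' hnee hee
    obtain ⟨u, v, huv⟩ := sym2_rep (ends e)
    have hune : u ≠ v := fun h => hloops e he (huv ▸ Sym2.mk_isDiag_iff.mpr h)
    set D : Set E := F \ {e, e'} with hD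
    have hDmem : ∀ f, f ∈ F → f ≠ e → f ≠ e' → f ∈ D := by
      intro f h1 h2 h3
      refine ⟨h1, ?_⟩
      simp [Set.mem_insert_iff, h2, h3]
    have hDe : ∀ f ∈ D, f ∈ F ∧ f ≠ e ∧ f ≠ e' := by
      intro f hf
      have h2 := hf.2
      simp only [Set.mem_insert_iff, Set.mem_singleton_iff, not_or] at h2
      exact ⟨hf.1, h2.1, h2.2⟩
    by_cases hcase : ∀ a b : V, MGReach ends D a b
    · -- F \ {e} is a 2ECSS, contradicting size minimality
      have hsub : MGTwoECSS ends (F \ {e}) := by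
        constructor
        · intro a b
          refine MGReach.lift (fun x y f hf hfxy => ?_) (hF.1 a b)
          rcases eq_or_ne f e with rfl | hne
          · exact MGReach.single (e := e') ⟨he', hnee.symm⟩ (hee.symm.trans hfxy)
          · exact MGReach.single ⟨hf, hne⟩ hfxy
        · intro e₀ he₀ a b
          rcases eq_or_ne e₀ e' with rfl | hne'
          · refine (hcase a b).mono ?_
            intro f hf
            obtain ⟨h1, h2, h3⟩ := hDe f hf
            exact ⟨⟨h1, h2⟩, h3⟩
          · refine MGReach.lift (fun x y f hf hfxy => ?_) (hF.2 e₀ he₀.1 a b)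
            rcases eq_or_ne f e with rfl | hne
            · exact MGReach.single (e := e')
                ⟨⟨he', hnee.symm⟩, fun h => hne' (by simpa using h.symm)⟩
                (hee.symm.trans hfxy)
            · exact MGReach.single ⟨⟨hf.1, hne⟩, hf.2⟩ hfxy
      have := hmin _ hsub
      have hlt : (F \ {e}).ncard < F.ncard :=
        Set.ncard_diff_singleton_lt_of_mem he (Set.toFinite F)
      omega
    · push_neg at hcase
      obtain ⟨a₀, b₀, hnab⟩ := hcase
      set A : Set V := {x | MGReach ends D u x} with hA
      have huA : u ∈ A := MGReach.rfl
      have hvA : v ∉ A := by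
        intro hv
        apply hnab
        refine MGReach.lift (fun x y f hf hfxy => ?_) (hF.2 e' he' a₀ b₀)
        rcases eq_or_ne f e with rfl | hne
        · rcases Sym2.eq_iff.mp (huv.symm.trans hfxy) with ⟨h1, h2⟩ | ⟨h1, h2⟩
          · subst h1; subst h2; exact hv
          · subst h1; subst h2; exact MGReach.symm hv
        · exact MGReach.single (hDmem f hf.1 hne hf.2) hfxy
      have hcomp : ∀ z, z ∈ A ∨ MGReach ends D v z := by
        intro z
        have h1 : MGReach ends (F \ {e'}) v z := hF.2 e' he' v z
        induction h1 with
        | refl => exact Or.inr MGReach.rfl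
        | @tail c d hvc' hstep ih =>
          obtain ⟨f, hf, hends⟩ := hstep
          rcases eq_or_ne f e with rfl | hfe
          · rcases Sym2.eq_iff.mp (huv.symm.trans hends) with ⟨h1', h2'⟩ | ⟨h1', h2'⟩
            · subst h2'; exact Or.inr MGReach.rfl
            · subst h1'; exact Or.inl huA
          · have hfD : f ∈ D := hDmem f hf.1 hfe hf.2
            rcases ih with hA' | hv'
            · exact Or.inl (MGReach.tail' hA' hfD hends)
            · exact Or.inr (MGReach.tail' hv' hfD hends)
      have hcross : ∃ (g : E) (x₀ y₀ : V), ends g = s(x₀, y₀) ∧ x₀ ∈ A ∧ y₀ ∉ A ∧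
          ends g ≠ s(u, v) := by
        by_cases hA1 : ∃ w, w ∈ A ∧ w ≠ u
        · obtain ⟨w, hwA, hwu⟩ := hA1
          have hpath := hvc u v w hune.symm hwu
          obtain ⟨x, y, ⟨hxu, hyu, g, hg⟩, hxA, hyA⟩ :=
            exists_cross (P := fun z => z ∉ A) hpath hvA (not_not_intro hwA)
          refine ⟨g, y, x, hg.trans Sym2.eq_swap, not_not.mp hyA, hxA, ?_⟩
          intro hgeq
          rcases Sym2.eq_iff.mp (hg.symm.trans hgeq) with ⟨h1, _⟩ | ⟨_, h2⟩
          · exact hxu h1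
          · exact hyu h2
        · push_neg at hA1
          obtain ⟨w, hwu, hwv⟩ := hthird u v
          have hpath := hvc v u w hune hwv
          have hwA : w ∉ A := fun h => hwu (hA1 w h)
          obtain ⟨x, y, ⟨hxv, hyv, g, hg⟩, hxA, hyA⟩ :=
            exists_cross (P := fun z => z ∈ A) hpath huA hwA
          refine ⟨g, x, y, hg, hxA, hyA, ?_⟩
          intro hgeq
          rcases Sym2.eq_iff.mp (hg.symm.trans hgeq) with ⟨_, h2⟩ | ⟨h1, _⟩
          · exact hyv h2
          · exact hxv h1
      obtain ⟨g, x₀, y₀, hg, hx₀, hy₀, hguv⟩ := hcross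
      have hge : g ≠ e := fun h => hguv (by rw [h, huv])
      have hge' : g ≠ e' := fun h => hguv (by rw [h, ← hee, huv])
      have hgF : g ∉ F := fun hgFmem =>
        hy₀ (MGReach.tail' hx₀ (hDmem g hgFmem hge hge') hg)
      set F'' : Set E := insert g (F \ {e'}) with hF''def
      have hsize : F''.ncard = F.ncard := by
        rw [hF''def, Set.ncard_insert_of_notMem (fun h => hgF h.1) (Set.toFinite _),
          Set.ncard_diff_singleton_add_one he' (Set.toFinite _)]
      have hkey : ∀ z, MGReach ends (insert g D) u z := by
        intro z
        rcases hcomp z with hz | hz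
        · exact hz.mono (Set.subset_insert _ _)
        · have h1 : MGReach ends (insert g D) u x₀ := hx₀.mono (Set.subset_insert _ _)
          have h2 : MGReach ends (insert g D) x₀ y₀ :=
            MGReach.single (Set.mem_insert _ _) hg
          have h3 : MGReach ends D v y₀ := (hcomp y₀).resolve_left hy₀
          exact ((h1.trans h2).trans ((h3.mono (Set.subset_insert _ _)).symm)).trans
            (hz.mono (Set.subset_insert _ _))
      have hF''2 : MGTwoECSS ends F'' := by
        constructor
        · intro a b
          exact (hF.2 e' he' a b).mono (Set.subset_insert _ _)
        · intro e₀ he₀ a b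
          rcases eq_or_ne e₀ g with heq0 | hg₀
          · rw [heq0]
            refine (hF.2 e' he' a b).mono ?_
            intro f hf
            exact ⟨Set.mem_insert_of_mem _ hf, fun h => hgF ((Set.mem_singleton_iff.mp h) ▸ hf.1)⟩
          rcases eq_or_ne e₀ e with heq0 | he₀e
          · rw [heq0]
            have hsub2 : insert g D ⊆ F'' \ {e} := by
              intro f hf
              rcases Set.mem_insert_iff.mp hf with rfl | hfD
              · exact ⟨Set.mem_insert _ _, hge⟩
              · obtain ⟨h1, h2, h3⟩ := hDe f hfD
                exact ⟨Set.mem_insert_of_mem _ ⟨h1, h3⟩, h2⟩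
            exact ((hkey a).symm.trans (hkey b)).mono hsub2
          · have he₀F : e₀ ∈ F ∧ e₀ ≠ e' := by
              rcases Set.mem_insert_iff.mp he₀ with rfl | h
              · exact absurd rfl hg₀
              · exact ⟨h.1, h.2⟩
            refine MGReach.lift (fun x y f hf hfxy => ?_) (hF.2 e₀ he₀F.1 a b)
            rcases eq_or_ne f e' with rfl | hfe'
            · exact MGReach.single (e := e)
                ⟨Set.mem_insert_of_mem _ ⟨he, hnee⟩, he₀e.symm⟩ (hee.trans hfxy)
            · exact MGReach.single
                ⟨Set.mem_insert_of_mem _ ⟨hf.1, hfe'⟩, hf.2⟩ hfxy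
      have hnog : ∀ f, f ∈ F \ {e'} → ends f ≠ ends g := by
        intro f hf hfg
        rcases eq_or_ne f e with rfl | hfe
        · exact hguv (hfg.symm.trans huv)
        · exact hy₀ (MGReach.tail' hx₀ (hDmem f hf.1 hfe hf.2) (hfg.trans hg))
      have he'F'' : e' ∉ F'' := by
        intro h
        rcases Set.mem_insert_iff.mp h with h1 | h1
        · exact hge' h1.symm
        · exact h1.2 rfl
      have hPsub : PS F'' ⊂ PS F := by
        rw [hPS]
        constructor
        · have key2 : ∀ c c' : E, c ∈ F'' → c' ∈ F'' → c ≠ c' → ends c = ends c' →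
              c ∈ F \ {e'} := by
            intro c c' hc hc' hnecc heqcc
            rcases Set.mem_insert_iff.mp hc with hcg | h
            · exfalso
              rcases Set.mem_insert_iff.mp hc' with hcg' | h2
              · exact hnecc (hcg.trans hcg'.symm)
              · exact hnog c' h2 (heqcc.symm.trans (by rw [hcg]))
            · exact h
          rintro ⟨a', b'⟩ ⟨ha', hb', hne', heq⟩
          have ha'' := key2 a' b' ha' hb' hne' heq
          have hb'' := key2 b' a' hb' ha' (Ne.symm hne') heq.symm
          exact ⟨ha''.1, hb''.1, hne', heq⟩
        · intro hsup
          have hmem : (e, e') ∈ {p : E × E | p.1 ∈ F'' ∧ p.2 ∈ F'' ∧ p.1 ≠ p.2 ∧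
              ends p.1 = ends p.2} := hsup ⟨he, he', hnee, hee⟩
          exact he'F'' hmem.2.1
      have hplt : (PS F'').ncard < (PS F).ncard :=
        Set.ncard_lt_ncard hPsub (Set.toFinite _)
      have hle : sInf S₂ ≤ (PS F'').ncard := Nat.sInf_le ⟨F'', hF''2, by rw [hsize, hFn], rfl⟩
      rw [← hFp] at hle
      omega
  exact ⟨F, hF, hmin, hloops, hpar⟩
end

section
/- Let H be a bridgeless 2-edge cover of a graph G in which every vertex has degree at least 2 in H. Then every connected component of H is 2-edge-connected and contains at least 3 edges; if additionally H is triangle-free (no component is a triangle) and G is simple, every component of H contains at least 4 edges. -/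
variable {V : Type*}

/-- The set of vertices incident to at least one edge of `F`. -/
def eSupport (F : Set (Sym2 V)) : Set V :=
  {v | ∃ e ∈ F, v ∈ e}

/-- The edge set `F` is connected (as a graph on its support). -/
def ConnSet (F : Set (Sym2 V)) : Prop :=
  ∀ a ∈ eSupport F, ∀ b ∈ eSupport F, ReachE F a b

/-- The edge set `F` is a 2-edge-connected subgraph (on its support):
connected and bridgeless. -/
def TwoECSet (F : Set (Sym2 V)) : Prop :=
  ConnSet F ∧ ∀ a b : V, s(a, b) ∈ F → ReachE (F \ {s(a, b)}) a b

/-- `C` is (the edge set of) a connected component of the edge set `F`. -/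
def IsComponent (F C : Set (Sym2 V)) : Prop :=
  C.Nonempty ∧ C ⊆ F ∧ ConnSet C ∧
    ∀ e ∈ F, e ∉ C → ∀ v ∈ e, v ∉ eSupport C

/-- The connected component of `F` containing `a`, `b`, `c` is a triangle. -/
def IsTriangleComp (F : Set (Sym2 V)) (a b c : V) : Prop :=
  a ≠ b ∧ b ≠ c ∧ a ≠ c ∧ s(a, b) ∈ F ∧ s(b, c) ∈ F ∧ s(a, c) ∈ F ∧
    ∀ e ∈ F, (a ∈ e ∨ b ∈ e ∨ c ∈ e) → e = s(a, b) ∨ e = s(b, c) ∨ e = s(a, c)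

/-- Let `H` be a bridgeless 2-edge cover of a (simple) graph `G` in which every vertex
has degree at least 2.  Then every connected component of `H` is 2-edge-connected and
contains at least 3 edges; if additionally `H` is triangle-free (no component is a
triangle), every component of `H` contains at least 4 edges. -/
theorem bridgeless_cover_components [Fintype V] (G : SimpleGraph V)
    (H : Set (Sym2 V)) (hHG : H ⊆ G.edgeSet)
    (hcover : ∀ v : V, 2 ≤ {e ∈ H | v ∈ e}.ncard)
    (hbridgeless : ∀ a b : V, s(a, b) ∈ H → ReachE (H \ {s(a, b)}) a b) :
    ∀ C : Set (Sym2 V), IsComponent H C →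
      (TwoECSet C ∧ 3 ≤ C.ncard) ∧
        ((¬ ∃ a b c : V, IsTriangleComp H a b c) → 4 ≤ C.ncard) := by
  intro C hC
  obtain ⟨hCne, hCH, hCconn, hCcomp⟩ := hC
  -- edges of H touching the support of C are in C
  have hkey : ∀ e ∈ H, ∀ v ∈ e, v ∈ eSupport C → e ∈ C := by
    intro e he v hv hsup
    by_contra h
    exact hCcomp e he h v hv hsup
  have hneV : ∀ a b : V, s(a, b) ∈ H → a ≠ b := fun a b h => (hHG h).ne
  -- walk lifting
  have hlift : ∀ (e : Sym2 V) (a b : V), a ∈ eSupport C →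
      Relation.ReflTransGen (fun x y => s(x, y) ∈ H \ {e}) a b →
      Relation.ReflTransGen (fun x y => s(x, y) ∈ C \ {e}) a b ∧ b ∈ eSupport C := by
    intro e a b ha h
    induction h with
    | refl => exact ⟨Relation.ReflTransGen.refl, ha⟩
    | @tail c d h1 h2 ih =>
      obtain ⟨w, hc⟩ := ih
      have hmem : s(c, d) ∈ C := hkey _ h2.1 c (by simp) hc
      exact ⟨w.tail ⟨hmem, h2.2⟩, ⟨s(c, d), hmem, by simp⟩⟩
  have hdeg : ∀ v : V, v ∈ eSupport C → ∀ e0 : Sym2 V, ∃ f ∈ C, v ∈ f ∧ f ≠ e0 := by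
    intro v hv e0
    have h2 := hcover v
    obtain ⟨f, hf, hfne⟩ := Set.exists_ne_of_one_lt_ncard (lt_of_lt_of_le one_lt_two h2) e0
    exact ⟨f, hkey f hf.1 v hf.2 hv, hf.2, hfne⟩
  obtain ⟨x, y, hxy⟩ : ∃ x y, s(x, y) ∈ C := by
    obtain ⟨e, he⟩ := hCne
    induction e using Sym2.ind with
    | _ a b => exact ⟨a, b, he⟩
  have hxsup : x ∈ eSupport C := ⟨s(x, y), hxy, by simp⟩
  have hysup : y ∈ eSupport C := ⟨s(x, y), hxy, by simp⟩
  have hxyne : x ≠ y := hneV x y (hCH hxy)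
  obtain ⟨f, hfC, hxf, hfne⟩ := hdeg x hxsup s(x, y)
  obtain ⟨g, hgC, hyg, hgne⟩ := hdeg y hysup s(x, y)
  have hfg : f ≠ g := by
    rintro rfl
    exact hfne ((Sym2.mem_and_mem_iff hxyne).mp ⟨hxf, hyg⟩)
  have hsub : {s(x, y), f, g} ⊆ C := by
    intro e he
    rcases he with rfl | rfl | rfl
    · exact hxy
    · exact hfC
    · exact hgC
  have hcard3 : ({s(x, y), f, g} : Set (Sym2 V)).ncard = 3 := by
    rw [Set.ncard_insert_of_notMem (by simp [hfne.symm, hgne.symm]),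
      Set.ncard_pair hfg]
  have h3 : 3 ≤ C.ncard :=
    hcard3 ▸ Set.ncard_le_ncard hsub C.toFinite
  refine ⟨⟨⟨hCconn, ?_⟩, h3⟩, ?_⟩
  · intro a b hab
    have ha : a ∈ eSupport C := ⟨s(a, b), hab, by simp⟩
    exact (hlift s(a, b) a b ha (hbridgeless a b (hCH hab))).1
  · intro htri
    by_contra h4
    have hcard : C.ncard = 3 := by omega
    have hCeq : ({s(x, y), f, g} : Set (Sym2 V)) = C :=
      Set.eq_of_subset_of_ncard_le hsub (by omega) C.toFinite
    obtain ⟨c, rfl⟩ := Sym2.mem_iff_exists.mp hxf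
    have hxc : x ≠ c := hneV x c (hCH hfC)
    have hcy : c ≠ y := by
      rintro rfl
      exact hfne rfl
    obtain ⟨d, rfl⟩ := Sym2.mem_iff_exists.mp hyg
    have hyd : y ≠ d := hneV y d (hCH hgC)
    have hdx : d ≠ x := by
      rintro rfl
      exact hgne (Sym2.eq_swap)
    have hcsup : c ∈ eSupport C := ⟨s(x, c), hfC, by simp⟩
    obtain ⟨e', he'C, hce', he'f⟩ := hdeg c hcsup s(x, c)
    have he'mem : e' ∈ ({s(x, y), s(x, c), s(y, d)} : Set (Sym2 V)) := hCeq ▸ he'C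
    have hcd : c = d := by
      rcases he'mem with rfl | rfl | rfl
      · rcases Sym2.mem_iff.mp hce' with rfl | rfl
        · exact absurd rfl hxc
        · exact absurd rfl hcy
      · exact absurd rfl he'f
      · rcases Sym2.mem_iff.mp hce' with rfl | rfl
        · exact absurd rfl hcy
        · rfl
    subst hcd
    refine htri ⟨x, y, c, hxyne, fun h => hcy h.symm, hxc, hCH hxy, hCH hgC, hCH hfC, ?_⟩
    intro e he hmem
    have heC : e ∈ C := by
      rcases hmem with hm | hm | hm
      · exact hkey e he x hm hxsup
      · exact hkey e he y hm hysup
      · exact hkey e he c hm hcsup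
    have : e ∈ ({s(x, y), s(x, c), s(y, c)} : Set (Sym2 V)) := hCeq ▸ heC
    rcases this with rfl | rfl | rfl
    · exact Or.inl rfl
    · exact Or.inr (Or.inr rfl)
    · exact Or.inr (Or.inl rfl)
end

section
/- Let H ⊆ E(G) be connected and spanning in a graph G, let {u,v,w} be a vertex set, and let (E1, E2) be a partition of H such that E1 and E2 only share the vertices {u,v,w}. Suppose that for each i ∈ {1,2}, every edge e ∈ E_i either lies in a 2-edge-connected component of E_i, or lies on an x–y path in E_i for some distinct x, y ∈ {u,v,w} such that E_{3−i} also contains an x–y path. Then H is a 2-edge-connected spanning subgraph of G. -/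
variable {V : Type*}

/-- `H` is a 2-edge-connected spanning subgraph: it connects all vertices and keeps
doing so after removing any single edge. -/
def TwoECSS (H : Set (Sym2 V)) : Prop :=
  (∀ a b : V, ReachE H a b) ∧ ∀ e ∈ H, ∀ a b : V, ReachE (H \ {e}) a b

/-- The condition of the lemma on the side `Ei` (with the other side `Ej`):
every edge `e ∈ Ei` either lies in a 2-edge-connected component of `Ei`, or lies on an
`x`–`y` path in `Ei` for some distinct `x, y ∈ {u,v,w}` such that `Ej` also contains an
`x`–`y` path. -/
def SideCondition (u v w : V) (Ei Ej : Set (Sym2 V)) : Prop :=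
  ∀ e ∈ Ei,
    (∃ C ⊆ Ei, TwoECSet C ∧ e ∈ C) ∨
    ∃ x ∈ ({u, v, w} : Set V), ∃ y ∈ ({u, v, w} : Set V), x ≠ y ∧
      (∃ a b : V, e = s(a, b) ∧ ReachE (Ei \ {e}) x a ∧ ReachE (Ei \ {e}) b y) ∧
      ReachE Ej x y

lemma reachE_symm {F : Set (Sym2 V)} {a b : V} (hr : ReachE F a b) : ReachE F b a :=
  haveI : Std.Symm (fun x y : V => s(x, y) ∈ F) := ⟨fun x y hxy => by rwa [Sym2.eq_swap]⟩
  Relation.ReflTransGen.symmetric.symm _ _ hr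

lemma reachE_trans {F : Set (Sym2 V)} {a b c : V} (h1 : ReachE F a b) (h2 : ReachE F b c) :
    ReachE F a c := Relation.ReflTransGen.trans h1 h2

lemma reachE_detour {H : Set (Sym2 V)} {e : Sym2 V} {a b : V}
    (hdet : ∀ x y : V, s(x, y) = e → ReachE (H \ {e}) x y)
    (hr : ReachE H a b) : ReachE (H \ {e}) a b := by
  induction hr with
  | refl => exact Relation.ReflTransGen.refl
  | tail _ hstep ih =>
    rename_i x y hxy
    by_cases hee : s(x, y) = e
    · exact reachE_trans ih (hdet x y hee)
    · exact Relation.ReflTransGen.tail ih ⟨hstep, hee⟩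

/-- Let `H ⊆ E(G)` be connected and spanning in a graph `G`, let `{u,v,w}` be a vertex
set, and let `(E1, E2)` be a partition of `H` such that `E1` and `E2` only share the
vertices `{u,v,w}`.  Suppose that for each `i ∈ {1,2}` every edge of `E_i` either lies
in a 2-edge-connected component of `E_i` or lies on an `x`–`y` path in `E_i` for
distinct `x, y ∈ {u,v,w}` such that `E_{3-i}` also contains an `x`–`y` path.
Then `H` is a 2-edge-connected spanning subgraph of `G`. -/
theorem glue_two_sides_two_edge_connected (G : SimpleGraph V)
    (H : Set (Sym2 V)) (hHG : H ⊆ G.edgeSet)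
    (hspan : ∀ a b : V, ReachE H a b)
    (u v w : V)
    (E1 E2 : Set (Sym2 V)) (hunion : E1 ∪ E2 = H) (hdisj : Disjoint E1 E2)
    (hshare : eSupport E1 ∩ eSupport E2 ⊆ ({u, v, w} : Set V))
    (hcond1 : SideCondition u v w E1 E2)
    (hcond2 : SideCondition u v w E2 E1) :
    TwoECSS H := by
  refine ⟨hspan, ?_⟩
  intro e he a b
  -- key: endpoints of e are connected in H \ {e}
  have key : ∀ x y : V, s(x, y) = e → ReachE (H \ {e}) x y := by
    have main : ∀ (Ei Ej : Set (Sym2 V)), Ei ∪ Ej = H → Disjoint Ei Ej →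
        SideCondition u v w Ei Ej → e ∈ Ei → ∀ x y : V, s(x, y) = e → ReachE (H \ {e}) x y := by
      intro Ei Ej hun hd hc hei
      have hEiH : Ei ⊆ H := hun ▸ Set.subset_union_left
      have hEjH' : Ej \ {e} ⊆ H \ {e} := Set.diff_subset_diff_left (hun ▸ Set.subset_union_right)
      have hEjH : Ej ⊆ H \ {e} := by
        intro f hf
        refine ⟨hun ▸ Set.subset_union_right hf, ?_⟩
        intro hfe
        exact hd.ne_of_mem hei hf ((Set.mem_singleton_iff.mp hfe).symm ▸ rfl)
      have base : ∀ a0 b0 : V, s(a0, b0) = e → ReachE (H \ {e}) a0 b0 := by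
        intro a0 b0 hab0
        rcases hc e hei with ⟨C, hCE, hC2, heC⟩ | ⟨x, _, y, _, hxy, ⟨a1, b1, hab1, hxa1, hb1y⟩, hxyj⟩
        · have := hC2.2 a0 b0 (hab0 ▸ heC)
          refine reachE_mono ?_ this
          rw [hab0]
          exact Set.diff_subset_diff_left (hCE.trans hEiH)
        · have hEiH' : Ei \ {e} ⊆ H \ {e} := Set.diff_subset_diff_left hEiH
          have hx : ReachE (H \ {e}) a1 b1 :=
            reachE_trans (reachE_symm (reachE_mono hEiH' hxa1))
              (reachE_trans (reachE_mono hEjH hxyj) (reachE_symm (reachE_mono hEiH' hb1y)))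
          have : s(a0, b0) = s(a1, b1) := hab0.trans hab1
          rcases Sym2.eq_iff.mp this with ⟨h1, h2⟩ | ⟨h1, h2⟩
          · exact h1 ▸ h2 ▸ hx
          · exact h1 ▸ h2 ▸ reachE_symm hx
      exact base
    rcases (hunion ▸ he : e ∈ E1 ∪ E2) with h1 | h2
    · exact main E1 E2 hunion hdisj hcond1 h1
    · exact main E2 E1 (Set.union_comm E2 E1 ▸ hunion) hdisj.symm hcond2 h2
  exact reachE_detour key (hspan a b)
end
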